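/- Let λ, μ, ν > 0. With ∇ the unique ℝ-bilinear map satisfying the Koszul formula for (V, g, [·,·]) and R(A,B)C := ∇_A(∇_B C) − ∇_B(∇_A C) − ∇_{[A,B]} C, the sectional curvatures of the generalised Riemannian Berger sphere satisfy g(R(X,Y)Y, X) = ((λ²−μ²+ν²)² + 4ν²(μ²−ν²))/(λμν)², g(R(X,Z)Z, X) = ((λ²+μ²−ν²)² − 4μ²(μ²−ν²))/(λμν)², and g(R(Y,Z)Z, Y) = ((λ²+μ²+ν²)² − 4(λ⁴+μ²ν²))/(λμν)². -/
import Mathlib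


/-- The Euclidean inner product on `ℝ³` making `X, Y, Z` orthonormal. -/
def gEuc (v w : Fin 3 → ℝ) : ℝ := v 0 * w 0 + v 1 * w 1 + v 2 * w 2

set_option maxHeartbeats 1600000 in
theorem sectional_curvature_riemannian_berger_sphere
    (l m n : ℝ) (hl : 0 < l) (hm : 0 < m) (hn : 0 < n)
    (X Y Z : Fin 3 → ℝ) (hX : X = ![1, 0, 0]) (hY : Y = ![0, 1, 0]) (hZ : Z = ![0, 0, 1])
    (bracket : (Fin 3 → ℝ) →ₗ[ℝ] (Fin 3 → ℝ) →ₗ[ℝ] (Fin 3 → ℝ))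
    (halt : ∀ v, bracket v v = 0)
    (hXY : bracket X Y = (2 * n / (l * m)) • Z)
    (hZX : bracket Z X = (2 * m / (l * n)) • Y)
    (hYZ : bracket Y Z = (2 * l / (m * n)) • X)
    (nabla : (Fin 3 → ℝ) →ₗ[ℝ] (Fin 3 → ℝ) →ₗ[ℝ] (Fin 3 → ℝ))
    (hKoszul : ∀ A B C, 2 * gEuc (nabla A B) C =
      gEuc C (bracket A B) + gEuc B (bracket C A) - gEuc A (bracket B C))
    (R : (Fin 3 → ℝ) → (Fin 3 → ℝ) → (Fin 3 → ℝ) → (Fin 3 → ℝ))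
    (hR : ∀ A B C, R A B C = nabla A (nabla B C) - nabla B (nabla A C) - nabla (bracket A B) C) :
    gEuc (R X Y Y) X = ((l ^ 2 - m ^ 2 + n ^ 2) ^ 2 + 4 * n ^ 2 * (m ^ 2 - n ^ 2)) / (l * m * n) ^ 2 ∧
    gEuc (R X Z Z) X = ((l ^ 2 + m ^ 2 - n ^ 2) ^ 2 - 4 * m ^ 2 * (m ^ 2 - n ^ 2)) / (l * m * n) ^ 2 ∧
    gEuc (R Y Z Z) Y = ((l ^ 2 + m ^ 2 + n ^ 2) ^ 2 - 4 * (l ^ 4 + m ^ 2 * n ^ 2)) / (l * m * n) ^ 2 := by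
  -- antisymmetry of the bracket
  have hanti : ∀ v w, bracket v w = - bracket w v := by
    intro v w
    have h := halt (v + w)
    simp only [map_add, LinearMap.add_apply, halt, add_zero, zero_add] at h
    exact eq_neg_of_add_eq_zero_right h
  have hYX : bracket Y X = -((2 * n / (l * m)) • Z) := by rw [hanti, hXY]
  have hXZ : bracket X Z = -((2 * m / (l * n)) • Y) := by rw [hanti, hZX]
  have hZY : bracket Z Y = -((2 * l / (m * n)) • X) := by rw [hanti, hYZ]
  -- reconstruction of a vector from its inner products with the basis
  have eval : ∀ w : Fin 3 → ℝ,
      w = gEuc w X • X + gEuc w Y • Y + gEuc w Z • Z := by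
    intro w
    funext i
    fin_cases i <;> simp [hX, hY, hZ, gEuc]
  -- Koszul in divided form
  have comp : ∀ A B C, gEuc (nabla A B) C =
      (gEuc C (bracket A B) + gEuc B (bracket C A) - gEuc A (bracket B C)) / 2 := by
    intro A B C
    linarith [hKoszul A B C]
  -- the Christoffel values
  obtain ⟨a, ha⟩ : ∃ a : ℝ, a = 2 * n / (l * m) := ⟨_, rfl⟩
  obtain ⟨b, hb⟩ : ∃ b : ℝ, b = 2 * m / (l * n) := ⟨_, rfl⟩
  obtain ⟨c, hc⟩ : ∃ c : ℝ, c = 2 * l / (m * n) := ⟨_, rfl⟩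
  rw [← ha] at hXY hYX
  rw [← hb] at hZX hXZ
  rw [← hc] at hYZ hZY
  have hNYY : nabla Y Y = 0 := by
    rw [eval (nabla Y Y), comp, comp, comp]
    simp only [halt, hXY, hYX, hXZ, hZX, hYZ, hZY]
    funext i
    fin_cases i <;> simp [hX, hY, hZ, gEuc] <;> ring
  have hNZZ : nabla Z Z = 0 := by
    rw [eval (nabla Z Z), comp, comp, comp]
    simp only [halt, hXY, hYX, hXZ, hZX, hYZ, hZY]
    funext i
    fin_cases i <;> simp [hX, hY, hZ, gEuc] <;> ring
  have hNXY : nabla X Y = ((a + b - c) / 2) • Z := by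
    rw [eval (nabla X Y), comp, comp, comp]
    simp only [halt, hXY, hYX, hXZ, hZX, hYZ, hZY]
    funext i
    fin_cases i <;> simp [hX, hY, hZ, gEuc] <;> ring
  have hNYZ : nabla Y Z = ((c + a - b) / 2) • X := by
    rw [eval (nabla Y Z), comp, comp, comp]
    simp only [halt, hXY, hYX, hXZ, hZX, hYZ, hZY]
    funext i
    fin_cases i <;> simp [hX, hY, hZ, gEuc] <;> ring
  have hNZY : nabla Z Y = ((a - b - c) / 2) • X := by
    rw [eval (nabla Z Y), comp, comp, comp]
    simp only [halt, hXY, hYX, hXZ, hZX, hYZ, hZY]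
    funext i
    fin_cases i <;> simp [hX, hY, hZ, gEuc] <;> ring
  have hNXZ : nabla X Z = ((c - a - b) / 2) • Y := by
    rw [eval (nabla X Z), comp, comp, comp]
    simp only [halt, hXY, hYX, hXZ, hZX, hYZ, hZY]
    funext i
    fin_cases i <;> simp [hX, hY, hZ, gEuc] <;> ring
  have hNZX : nabla Z X = ((b + c - a) / 2) • Y := by
    rw [eval (nabla Z X), comp, comp, comp]
    simp only [halt, hXY, hYX, hXZ, hZX, hYZ, hZY]
    funext i
    fin_cases i <;> simp [hX, hY, hZ, gEuc] <;> ring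
  -- curvature vectors
  have hRXYY : R X Y Y = (-(((a + b - c) / 2) * ((c + a - b) / 2)) - a * ((a - b - c) / 2)) • X := by
    rw [hR, hNYY, hNXY, hXY, map_zero, map_smul, map_smul, LinearMap.smul_apply, hNYZ, hNZY]
    funext i
    fin_cases i <;> simp [hX, hY, hZ] <;> ring
  have hRXZZ : R X Z Z = (-(((c - a - b) / 2) * ((a - b - c) / 2)) + b * ((c + a - b) / 2)) • X := by
    rw [hR, hNZZ, hNXZ, hXZ, map_zero, map_smul, map_neg, map_smul,
      LinearMap.neg_apply, LinearMap.smul_apply, hNZY, hNYZ]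
    funext i
    fin_cases i <;> simp [hX, hY, hZ] <;> ring
  have hRYZZ : R Y Z Z = (-(((c + a - b) / 2) * ((b + c - a) / 2)) - c * ((c - a - b) / 2)) • Y := by
    rw [hR, hNZZ, hNYZ, hYZ, map_zero, map_smul, map_smul, LinearMap.smul_apply, hNZX, hNXZ]
    funext i
    fin_cases i <;> simp [hX, hY, hZ] <;> ring
  have hl' := hl.ne'
  have hm' := hm.ne'
  have hn' := hn.ne'
  refine ⟨?_, ?_, ?_⟩
  · rw [hRXYY]
    have hs : ∀ s : ℝ, gEuc (s • X) X = s := by intro s; simp [hX, gEuc]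
    rw [hs, ha, hb, hc]
    field_simp
    ring
  · rw [hRXZZ]
    have hs : ∀ s : ℝ, gEuc (s • X) X = s := by intro s; simp [hX, gEuc]
    rw [hs, ha, hb, hc]
    field_simp
    ring
  · rw [hRYZZ]
    have hs : ∀ s : ℝ, gEuc (s • Y) Y = s := by intro s; simp [hY, gEuc]
    rw [hs, ha, hb, hc]
    field_simp
    ring
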